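/- arXiv:0911.1460 — 2 statements merged into one kernel-verified Lean document; each statement's English description precedes it below -/
import Mathlib

section
/- Let (V, ω) be a finite dimensional symplectic vector space and W, W' ⊆ V coisotropic subspaces with dim W' = dim W and W + (W')^ω = V. Set U := W ∩ W'. Then U + W^ω = W, i.e. the natural linear map U → W/W^ω, v ↦ [v], is surjective; combined with U ∩ W^ω = {0} it is bijective. -/
/-- The symplectic complement `W^ω = {v ∈ V | ω(v,w) = 0 for all w ∈ W}`. -/
def symplCompl {V : Type*} [AddCommGroup V] [Module ℝ V]
    (ω : V →ₗ[ℝ] V →ₗ[ℝ] ℝ) (W : Submodule ℝ V) : Submodule ℝ V where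
  carrier := {v | ∀ w ∈ W, ω v w = 0}
  add_mem' := by
    intro a b ha hb w hw
    simp [map_add, LinearMap.add_apply, ha w hw, hb w hw]
  zero_mem' := by
    intro w hw
    simp
  smul_mem' := by
    intro c a ha w hw
    simp [map_smul, LinearMap.smul_apply, ha w hw]


open Module Submodule

section aux
variable {V : Type*} [AddCommGroup V] [Module ℝ V] [FiniteDimensional ℝ V]
  (ω : V →ₗ[ℝ] V →ₗ[ℝ] ℝ)

omit [FiniteDimensional ℝ V] in
lemma mem_symplCompl {W : Submodule ℝ V} {v : V} :
    v ∈ symplCompl ω W ↔ ∀ w ∈ W, ω v w = 0 := Iff.rfl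

omit [FiniteDimensional ℝ V] in
lemma symplCompl_eq_comap (W : Submodule ℝ V) :
    symplCompl ω W = (W.dualAnnihilator).comap ω := by
  ext v
  rw [Submodule.mem_comap, Submodule.mem_dualAnnihilator]
  exact Iff.rfl

lemma omega_bij (hnondeg : ∀ v : V, (∀ w : V, ω v w = 0) → v = 0) :
    Function.Bijective (ω : V →ₗ[ℝ] Module.Dual ℝ V) := by
  have hinj : Function.Injective (ω : V →ₗ[ℝ] Module.Dual ℝ V) := by
    rw [← LinearMap.ker_eq_bot, eq_bot_iff]
    intro v hv
    exact hnondeg v (fun w => congrFun (congrArg _ hv) w)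
  exact ⟨hinj, (LinearMap.injective_iff_surjective_of_finrank_eq_finrank
    (Subspace.dual_finrank_eq).symm).mp hinj⟩

lemma finrank_symplCompl (hnondeg : ∀ v : V, (∀ w : V, ω v w = 0) → v = 0)
    (W : Submodule ℝ V) :
    finrank ℝ (symplCompl ω W) + finrank ℝ W = finrank ℝ V := by
  let e : V ≃ₗ[ℝ] Module.Dual ℝ V := LinearEquiv.ofBijective ω (omega_bij ω hnondeg)
  have h1 : symplCompl ω W = (W.dualAnnihilator).comap (e : V →ₗ[ℝ] Module.Dual ℝ V) :=
    symplCompl_eq_comap ω W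
  rw [h1, Submodule.comap_equiv_eq_map_symm, LinearEquiv.finrank_map_eq]
  have h2 : finrank ℝ (V ⧸ W) = finrank ℝ W.dualAnnihilator :=
    LinearEquiv.finrank_eq (Subspace.quotEquivAnnihilator W)
  rw [← h2, add_comm]
  rw [add_comm]
  exact Submodule.finrank_quotient_add_finrank W

lemma symplCompl_double (halt : ∀ v : V, ω v v = 0)
    (hnondeg : ∀ v : V, (∀ w : V, ω v w = 0) → v = 0) (W : Submodule ℝ V) :
    symplCompl ω (symplCompl ω W) = W := by
  have skew : ∀ v w : V, ω v w = - ω w v := by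
    intro v w
    have h := halt (v + w)
    simp only [map_add, LinearMap.add_apply, halt v, halt w] at h
    linarith
  have hle : W ≤ symplCompl ω (symplCompl ω W) := by
    intro w hw u hu
    rw [skew]
    simp [hu w hw]
  refine (Submodule.eq_of_le_of_finrank_le hle ?_).symm
  have h1 := finrank_symplCompl ω hnondeg W
  have h2 := finrank_symplCompl ω hnondeg (symplCompl ω W)
  omega

end aux


/-- Let `(V, ω)` be a finite dimensional symplectic vector space and `W, W' ⊆ V`
coisotropic subspaces with `dim W' = dim W` and `W + (W')^ω = V`.  Set `U := W ∩ W'`.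
Then `U + W^ω = W`; combined with `U ∩ W^ω = {0}` the natural map `U → W/W^ω` is
bijective. -/
theorem stmt3 {V : Type*} [AddCommGroup V] [Module ℝ V] [FiniteDimensional ℝ V]
    (ω : V →ₗ[ℝ] V →ₗ[ℝ] ℝ)
    (halt : ∀ v : V, ω v v = 0)
    (hnondeg : ∀ v : V, (∀ w : V, ω v w = 0) → v = 0)
    (W W' : Submodule ℝ V)
    (hW : symplCompl ω W ≤ W) (hW' : symplCompl ω W' ≤ W')
    (hdim : Module.finrank ℝ W' = Module.finrank ℝ W)
    (hsum : W ⊔ symplCompl ω W' = ⊤) :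
    (W ⊓ W') ⊔ symplCompl ω W = W ∧ (W ⊓ W') ⊓ symplCompl ω W = ⊥ := by
  set n := Module.finrank ℝ V with hn
  -- W^ω ∩ W' = ⊥
  have hanti : ∀ A B : Submodule ℝ V, A ≤ B → symplCompl ω B ≤ symplCompl ω A :=
    fun A B hAB v hv a ha => hv a (hAB ha)
  have hWc_inter : symplCompl ω W ⊓ W' = ⊥ := by
    rw [eq_bot_iff]
    intro x hx
    obtain ⟨hx1, hx2⟩ := hx
    -- x ∈ W^ω and x ∈ W' = (W'^ω)^ω, so x kills W ⊔ W'^ω = ⊤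
    rw [← symplCompl_double ω halt hnondeg W'] at hx2
    have hx3 : x ∈ symplCompl ω (W ⊔ symplCompl ω W') := by
      rw [symplCompl_eq_comap] at *
      rw [Submodule.dualAnnihilator_sup_eq]
      exact ⟨hx1, hx2⟩
    rw [hsum] at hx3
    exact hnondeg x (fun w => hx3 w trivial)
  -- intersection part
  have hinter : (W ⊓ W') ⊓ symplCompl ω W = ⊥ := by
    rw [eq_bot_iff]
    intro x ⟨⟨_, hx2⟩, hx3⟩
    rw [← hWc_inter]
    exact ⟨hx3, hx2⟩
  refine ⟨?_, hinter⟩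
  -- dimension counts
  have hfW := finrank_symplCompl ω hnondeg W
  have hfW' := finrank_symplCompl ω hnondeg W'
  -- W ⊔ W' = ⊤
  have hsup : W ⊔ W' = ⊤ := by
    rw [eq_top_iff, ← hsum]
    exact sup_le_sup le_rfl hW'
  have hU : Module.finrank ℝ (W ⊓ W' : Submodule ℝ V) + n
      = Module.finrank ℝ W + Module.finrank ℝ W' := by
    have := Submodule.finrank_sup_add_finrank_inf_eq W W'
    rw [hsup] at this
    rw [finrank_top] at this
    omega
  -- U ⊓ W^ω ⊆ the full inter is ⊥
  have hdisj : (W ⊓ W') ⊓ symplCompl ω W = ⊥ := hinter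
  have hle : (W ⊓ W') ⊔ symplCompl ω W ≤ W := sup_le inf_le_left hW
  refine Submodule.eq_of_le_of_finrank_le hle ?_
  have hsum2 := Submodule.finrank_sup_add_finrank_inf_eq (W ⊓ W') (symplCompl ω W)
  rw [hdisj, finrank_bot] at hsum2
  omega
end

section
/- Let (V, ω) be a finite dimensional symplectic vector space, V = V₀ ⊕ V₁ ⊕ V₂ a direct sum decomposition, and Ψ a symplectic automorphism of (V, ω) that, with respect to this splitting, has block form Ψ = [[Ψ₀₀, 0, Ψ₀₂], [Ψ₁₀, Ψ₁₁, Ψ₁₂], [0, 0, Ψ₂₂]]. Assume ω vanishes on V₀ × V₁, on V₁ × V₁, on V₀ × V₂ (pairing within the relevant blocks) so that for v₀ ∈ V₀, w₂ ∈ V₂: ω(Ψ₀₀v₀, Ψ₀₂w₂) + ω(Ψ₁₀v₀, Ψ₂₂w₂) = 0, and for v₂, w₂ ∈ V₂: ω(Ψ₀₂v₂, Ψ₀₂w₂) + ω(Ψ₁₂v₂, Ψ₂₂w₂) + ω(Ψ₂₂v₂, Ψ₁₂w₂) = 0. Then for every t ∈ ℝ the map Ψ^t := [[Ψ₀₀,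 0, tΨ₀₂], [tΨ₁₀, Ψ₁₁, t²Ψ₁₂], [0, 0, Ψ₂₂]] is also a symplectic automorphism of (V, ω). -/
/-- The block-triangular map `Ψ^t` on `V₀ ⊕ V₁ ⊕ V₂` with blocks
`[[Ψ₀₀, 0, tΨ₀₂], [tΨ₁₀, Ψ₁₁, t²Ψ₁₂], [0, 0, Ψ₂₂]]`. -/
def blockMap {V₀ V₁ V₂ : Type*} [AddCommGroup V₀] [Module ℝ V₀]
    [AddCommGroup V₁] [Module ℝ V₁] [AddCommGroup V₂] [Module ℝ V₂]
    (Ψ₀₀ : V₀ →ₗ[ℝ] V₀) (Ψ₀₂ : V₂ →ₗ[ℝ] V₀) (Ψ₁₀ : V₀ →ₗ[ℝ] V₁)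
    (Ψ₁₁ : V₁ →ₗ[ℝ] V₁) (Ψ₁₂ : V₂ →ₗ[ℝ] V₁) (Ψ₂₂ : V₂ →ₗ[ℝ] V₂)
    (t : ℝ) : V₀ × V₁ × V₂ → V₀ × V₁ × V₂ :=
  fun v => (Ψ₀₀ v.1 + t • Ψ₀₂ v.2.2,
            (t • Ψ₁₀ v.1 + Ψ₁₁ v.2.1 + t ^ 2 • Ψ₁₂ v.2.2, Ψ₂₂ v.2.2))

/-- Let `(V, ω)` with `V = V₀ ⊕ V₁ ⊕ V₂` be a finite dimensional symplectic vector
space and `Ψ` a symplectic automorphism with block form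
`[[Ψ₀₀, 0, Ψ₀₂], [Ψ₁₀, Ψ₁₁, Ψ₁₂], [0, 0, Ψ₂₂]]` (that is, `Ψ = Ψ^1 = blockMap ... 1`).
Assume `ω` vanishes on `V₀ × V₁`, on `V₁ × V₁` and on `V₀ × V₂`, so that
`ω(Ψ₀₀v₀, Ψ₀₂w₂) + ω(Ψ₁₀v₀, Ψ₂₂w₂) = 0` and
`ω(Ψ₀₂v₂, Ψ₀₂w₂) + ω(Ψ₁₂v₂, Ψ₂₂w₂) + ω(Ψ₂₂v₂, Ψ₁₂w₂) = 0`.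
Then for every `t ∈ ℝ` the map `Ψ^t` is again a symplectic automorphism of `(V, ω)`. -/
theorem stmt10 {V₀ V₁ V₂ : Type*} [AddCommGroup V₀] [Module ℝ V₀]
    [AddCommGroup V₁] [Module ℝ V₁] [AddCommGroup V₂] [Module ℝ V₂]
    [FiniteDimensional ℝ V₀] [FiniteDimensional ℝ V₁] [FiniteDimensional ℝ V₂]
    (ω : (V₀ × V₁ × V₂) →ₗ[ℝ] (V₀ × V₁ × V₂) →ₗ[ℝ] ℝ)
    (halt : ∀ v, ω v v = 0)
    (hnondeg : ∀ v, (∀ w, ω v w = 0) → v = 0)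
    (Ψ₀₀ : V₀ →ₗ[ℝ] V₀) (Ψ₀₂ : V₂ →ₗ[ℝ] V₀) (Ψ₁₀ : V₀ →ₗ[ℝ] V₁)
    (Ψ₁₁ : V₁ →ₗ[ℝ] V₁) (Ψ₁₂ : V₂ →ₗ[ℝ] V₁) (Ψ₂₂ : V₂ →ₗ[ℝ] V₂)
    (h01 : ∀ (a : V₀) (b : V₁), ω (a, 0, 0) (0, b, 0) = 0)
    (h11 : ∀ a b : V₁, ω (0, a, 0) (0, b, 0) = 0)
    (h02 : ∀ (a : V₀) (b : V₂), ω (a, 0, 0) (0, 0, b) = 0)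
    (hid1 : ∀ (v₀ : V₀) (w₂ : V₂),
      ω (Ψ₀₀ v₀, 0, 0) (Ψ₀₂ w₂, 0, 0) + ω (0, Ψ₁₀ v₀, 0) (0, 0, Ψ₂₂ w₂) = 0)
    (hid2 : ∀ v₂ w₂ : V₂,
      ω (Ψ₀₂ v₂, 0, 0) (Ψ₀₂ w₂, 0, 0) + ω (0, Ψ₁₂ v₂, 0) (0, 0, Ψ₂₂ w₂)
        + ω (0, 0, Ψ₂₂ v₂) (0, Ψ₁₂ w₂, 0) = 0)
    (hΨsymp : ∀ v w : V₀ × V₁ × V₂,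
      ω (blockMap Ψ₀₀ Ψ₀₂ Ψ₁₀ Ψ₁₁ Ψ₁₂ Ψ₂₂ 1 v) (blockMap Ψ₀₀ Ψ₀₂ Ψ₁₀ Ψ₁₁ Ψ₁₂ Ψ₂₂ 1 w)
        = ω v w)
    (hΨbij : Function.Bijective (blockMap Ψ₀₀ Ψ₀₂ Ψ₁₀ Ψ₁₁ Ψ₁₂ Ψ₂₂ 1)) :
    ∀ t : ℝ,
      (∀ v w : V₀ × V₁ × V₂,
        ω (blockMap Ψ₀₀ Ψ₀₂ Ψ₁₀ Ψ₁₁ Ψ₁₂ Ψ₂₂ t v) (blockMap Ψ₀₀ Ψ₀₂ Ψ₁₀ Ψ₁₁ Ψ₁₂ Ψ₂₂ t w)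
          = ω v w) ∧
      Function.Bijective (blockMap Ψ₀₀ Ψ₀₂ Ψ₁₀ Ψ₁₁ Ψ₁₂ Ψ₂₂ t) := by
  intro t
  -- skew symmetry
  have hskew : ∀ v w : V₀ × V₁ × V₂, ω w v = -ω v w := by
    intro v w
    have h := halt (v + w)
    simp only [map_add, LinearMap.add_apply] at h
    rw [halt v, halt w] at h
    linarith
  have h10 : ∀ (a : V₁) (b : V₀), ω (0, a, 0) (b, 0, 0) = 0 := by
    intro a b; rw [hskew, h01 b a, neg_zero]
  have h20 : ∀ (a : V₂) (b : V₀), ω (0, 0, a) (b, 0, 0) = 0 := by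
    intro a b; rw [hskew, h02 b a, neg_zero]
  have hdec : ∀ (a : V₀) (b : V₁) (c : V₂),
      ((a, b, c) : V₀ × V₁ × V₂) = (a, 0, 0) + (0, b, 0) + (0, 0, c) := by
    intro a b c; simp [Prod.ext_iff]
  -- full bilinear expansion using the vanishing pairings
  have hexp : ∀ (a : V₀) (b : V₁) (c : V₂) (a' : V₀) (b' : V₁) (c' : V₂),
      ω (a, b, c) (a', b', c')
        = ω (a, 0, 0) (a', 0, 0) + ω (0, b, 0) (0, 0, c')
          + ω (0, 0, c) (0, b', 0) + ω (0, 0, c) (0, 0, c') := by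
    intro a b c a' b' c'
    rw [hdec a b c, hdec a' b' c']
    simp only [map_add, LinearMap.add_apply, h01, h10, h11, h02, h20]
    ring
  -- componentwise sum/smul lemmas
  have e0a : ∀ (x y : V₀), ((x + y, 0, 0) : V₀ × V₁ × V₂) = (x, 0, 0) + (y, 0, 0) := by
    intro x y; simp [Prod.ext_iff]
  have e0s : ∀ (r : ℝ) (x : V₀), ((r • x, 0, 0) : V₀ × V₁ × V₂) = r • ((x, 0, 0) : V₀ × V₁ × V₂) := by
    intro r x; simp [Prod.ext_iff]
  have e1a : ∀ (x y : V₁), ((0, x + y, 0) : V₀ × V₁ × V₂) = (0, x, 0) + (0, y, 0) := by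
    intro x y; simp [Prod.ext_iff]
  have e1s : ∀ (r : ℝ) (x : V₁), ((0, r • x, 0) : V₀ × V₁ × V₂) = r • ((0, x, 0) : V₀ × V₁ × V₂) := by
    intro r x; simp [Prod.ext_iff]
  have hz : ((0, 0, 0) : V₀ × V₁ × V₂) = 0 := rfl
  -- the symplectic condition at t = 1, unfolded
  have hS : ∀ v w : V₀ × V₁ × V₂,
      ω (Ψ₀₀ v.1 + Ψ₀₂ v.2.2, Ψ₁₀ v.1 + Ψ₁₁ v.2.1 + Ψ₁₂ v.2.2, Ψ₂₂ v.2.2)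
        (Ψ₀₀ w.1 + Ψ₀₂ w.2.2, Ψ₁₀ w.1 + Ψ₁₁ w.2.1 + Ψ₁₂ w.2.2, Ψ₂₂ w.2.2) = ω v w := by
    intro v w
    have := hΨsymp v w
    simpa only [blockMap, one_smul, one_pow] using this
  -- block identities
  have hA : ∀ a b : V₀, ω (Ψ₀₀ a, 0, 0) (Ψ₀₀ b, 0, 0) = ω (a, 0, 0) (b, 0, 0) := by
    intro a b
    have h := hS (a, 0, 0) (b, 0, 0)
    simp only [map_zero, add_zero, zero_add] at h
    rw [hexp, hexp] at h
    simp only [hz, map_zero, LinearMap.zero_apply, add_zero, zero_add] at h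
    exact h
  have hC : ∀ (a : V₁) (b : V₂),
      ω (0, Ψ₁₁ a, 0) (0, 0, Ψ₂₂ b) = ω (0, a, 0) (0, 0, b) := by
    intro a b
    have h := hS (0, a, 0) (0, 0, b)
    simp only [map_zero, add_zero, zero_add] at h
    rw [hexp, hexp] at h
    simp only [hz, map_zero, LinearMap.zero_apply, add_zero, zero_add] at h
    exact h
  have hE : ∀ a b : V₂,
      ω (0, 0, Ψ₂₂ a) (0, 0, Ψ₂₂ b) = ω (0, 0, a) (0, 0, b) := by
    intro a b
    have h := hS (0, 0, a) (0, 0, b)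
    simp only [map_zero, add_zero, zero_add] at h
    rw [hexp, hexp] at h
    simp only [hz, map_zero, LinearMap.zero_apply, add_zero, zero_add] at h
    have h2 := hid2 a b
    linarith
  have hC' : ∀ (a : V₂) (b : V₁),
      ω (0, 0, Ψ₂₂ a) (0, Ψ₁₁ b, 0) = ω (0, 0, a) (0, b, 0) := by
    intro a b
    have h1 := hskew ((0, Ψ₁₁ b, 0) : V₀ × V₁ × V₂) (0, 0, Ψ₂₂ a)
    have h2 := hskew ((0, b, 0) : V₀ × V₁ × V₂) (0, 0, a)
    have h3 := hC b a
    linarith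
  have hid1' : ∀ (a : V₀) (b : V₂),
      ω (Ψ₀₂ b, 0, 0) (Ψ₀₀ a, 0, 0) + ω (0, 0, Ψ₂₂ b) (0, Ψ₁₀ a, 0) = 0 := by
    intro a b
    have h1 := hskew ((Ψ₀₂ b, 0, 0) : V₀ × V₁ × V₂) (Ψ₀₀ a, 0, 0)
    have h2 := hskew ((0, 0, Ψ₂₂ b) : V₀ × V₁ × V₂) (0, Ψ₁₀ a, 0)
    have h3 := hid1 a b
    linarith
  -- the symplectic property of Ψ^t
  have hsymp : ∀ v w : V₀ × V₁ × V₂,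
      ω (blockMap Ψ₀₀ Ψ₀₂ Ψ₁₀ Ψ₁₁ Ψ₁₂ Ψ₂₂ t v) (blockMap Ψ₀₀ Ψ₀₂ Ψ₁₀ Ψ₁₁ Ψ₁₂ Ψ₂₂ t w)
        = ω v w := by
    intro v w
    obtain ⟨v0, v1, v2⟩ := v
    obtain ⟨w0, w1, w2⟩ := w
    simp only [blockMap]
    rw [hexp]
    simp only [e0a, e0s, e1a, e1s, map_add, map_smul, LinearMap.add_apply,
      LinearMap.smul_apply, smul_eq_mul, hz, map_zero, LinearMap.zero_apply,
      add_zero, zero_add]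
    linear_combination hA v0 w0 + hC v1 w2 + hC' v2 w1 + hE v2 w2
      + t * hid1 v0 w2 + t * hid1' w0 v2 + t ^ 2 * hid2 v2 w2
      - hexp v0 v1 v2 w0 w1 w2
  refine ⟨hsymp, ?_⟩
  -- bijectivity: package Ψ^t as a linear map
  set F1 : (V₀ × V₁ × V₂) →ₗ[ℝ] V₀ :=
    Ψ₀₀.comp (LinearMap.fst ℝ V₀ (V₁ × V₂))
      + t • Ψ₀₂.comp ((LinearMap.snd ℝ V₁ V₂).comp (LinearMap.snd ℝ V₀ (V₁ × V₂))) with hF1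
  set F2 : (V₀ × V₁ × V₂) →ₗ[ℝ] V₁ :=
    t • Ψ₁₀.comp (LinearMap.fst ℝ V₀ (V₁ × V₂))
      + Ψ₁₁.comp ((LinearMap.fst ℝ V₁ V₂).comp (LinearMap.snd ℝ V₀ (V₁ × V₂)))
      + t ^ 2 • Ψ₁₂.comp ((LinearMap.snd ℝ V₁ V₂).comp (LinearMap.snd ℝ V₀ (V₁ × V₂))) with hF2
  set F3 : (V₀ × V₁ × V₂) →ₗ[ℝ] V₂ :=
    Ψ₂₂.comp ((LinearMap.snd ℝ V₁ V₂).comp (LinearMap.snd ℝ V₀ (V₁ × V₂))) with hF3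
  set L : (V₀ × V₁ × V₂) →ₗ[ℝ] (V₀ × V₁ × V₂) := F1.prod (F2.prod F3) with hL
  have hLcoe : blockMap Ψ₀₀ Ψ₀₂ Ψ₁₀ Ψ₁₁ Ψ₁₂ Ψ₂₂ t = ⇑L := by
    funext x
    simp [hL, hF1, hF2, hF3, blockMap, LinearMap.prod_apply, LinearMap.add_apply,
      LinearMap.smul_apply, LinearMap.comp_apply]
  rw [hLcoe]
  have hinj : Function.Injective L := by
    rw [← LinearMap.ker_eq_bot, LinearMap.ker_eq_bot']
    intro v hv
    refine hnondeg v fun w => ?_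
    have h := hsymp v w
    rw [hLcoe] at h
    rw [hv] at h
    simpa using h.symm
  exact ⟨hinj, LinearMap.injective_iff_surjective.mp hinj⟩
end
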